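/- arXiv:1805.09219 — 3 statements merged into one kernel-verified Lean document; each statement's English description precedes it below -/
import Mathlib

section
/- Assume (H4) and L > 2. Let k ∈ ℕ, a ∈ [0,1), and x̂ ∈ C'_ψ with f^{k+1}(x̂) = x̂. Let 0 < γ ≤ 1/49 and assume 0 < ε ≤ γ L^{−(2k+1)}. Let U := {x ∈ S¹ : d(x, x̂) ≤ √γ L^{−(k+1)}}. Then for every sample ω ∈ Ω: (i) |(f^{k+1}_ω)'(z)| ≤ 2√γ < 1/2 for all z ∈ U; and (ii) d(f^{k+1}_ω(z), x̂) ≤ 7γ L^{−(k+1)} for all z ∈ U; in particular f^{k+1}_ω(U) ⊆ U. -/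
open MeasureTheory Set Filter Topology

noncomputable section

/-! ## Basic circle setup.
We parametrize `S¹ = ℝ/ℤ` by `[0,1)`.  Functions and subsets of `S¹` are represented by
1-periodic functions/subsets of `ℝ`. -/

/-- The circle distance on `ℝ/ℤ`, computed on representatives. -/
def dS1 (x y : ℝ) : ℝ := |x - y - (round (x - y) : ℝ)|

/-- Circle distance from a point to a set (a subset of `ℝ`, viewed 1-periodically). -/
def dS1Set (x : ℝ) (A : Set ℝ) : ℝ := sInf (dS1 x '' A)

/-- The critical set `C'_ψ = {ψ' = 0}` as a subset of `ℝ`. -/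
def Crit (ψ : ℝ → ℝ) : Set ℝ := {x : ℝ | deriv ψ x = 0}

/-- (H1): the critical set is finite (as a subset of `S¹ ≅ [0,1)`). -/
def H1 (ψ : ℝ → ℝ) : Prop := (Crit ψ ∩ Ico (0:ℝ) 1).Finite

/-- (H2): no degenerate critical points. -/
def H2 (ψ : ℝ → ℝ) : Prop := ∀ x ∈ Crit ψ, deriv (deriv ψ) x ≠ 0

/-- (H4): `‖ψ'‖_{C⁰} ≤ 1/10` and `‖ψ''‖_{C⁰} ≤ 1/10`. -/
def H4 (ψ : ℝ → ℝ) : Prop :=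
  (∀ x : ℝ, |deriv ψ x| ≤ 1 / 10) ∧ ∀ x : ℝ, |deriv (deriv ψ) x| ≤ 1 / 10

/-- Standing assumptions on `ψ`: 1-periodicity, `C²` smoothness, (H1), (H2). -/
def PsiReg (ψ : ℝ → ℝ) : Prop :=
  Function.Periodic ψ 1 ∧ ContDiff ℝ 2 ψ ∧ H1 ψ ∧ H2 ψ

/-- The constant `K₁ = K₁(ψ)` with `|ψ'(x)| ≥ K₁ d(x, C'_ψ)`. -/
def K1hyp (ψ : ℝ → ℝ) (K₁ : ℝ) : Prop :=
  0 < K₁ ∧ ∀ x : ℝ, K₁ * dS1Set x (Crit ψ) ≤ |deriv ψ x|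

/-- `‖ψ''‖_{C⁰}`. -/
def psiC2norm (ψ : ℝ → ℝ) : ℝ := ⨆ x : ℝ, |deriv (deriv ψ) x|

/-- The circle map `f = f_{L,a} = Lψ + a (mod 1)`, on representatives in `[0,1)`. -/
def cmap (ψ : ℝ → ℝ) (L a x : ℝ) : ℝ := Int.fract (L * ψ x + a)

/-- The random orbit `X_{n+1} = f_{ω_n}(X_n) = f(X_n + ω_n)` on `S¹ ≅ [0,1)`;
`orbitW ψ L a ω x n = fⁿ_ω(x)`. -/
def orbitW (ψ : ℝ → ℝ) (L a : ℝ) (ω : ℕ → ℝ) (x : ℝ) : ℕ → ℝ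
  | 0 => x
  | n + 1 => cmap ψ L a (orbitW ψ L a ω x n + ω n)

/-- Deterministic iterates `fⁿ(x)`. -/
def detIter (ψ : ℝ → ℝ) (L a x : ℝ) (n : ℕ) : ℝ := orbitW ψ L a (fun _ => 0) x n

/-- Condition `(H3)_{c,k}`: `d(fˡ(x̂), C'_ψ) ≥ c` for all `x̂ ∈ C'_ψ` and `1 ≤ l ≤ k`. -/
def H3cond (ψ : ℝ → ℝ) (L a c : ℝ) (k : ℕ) : Prop :=
  ∀ x ∈ Crit ψ, ∀ l : ℕ, 1 ≤ l → l ≤ k → c ≤ dS1Set (detIter ψ L a x l) (Crit ψ)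

/-- The lifted random orbit `X̃_{n+1} = f̃(X̃_n + ω_n) = Lψ(X̃_n + ω_n) + a` on `ℝ`;
`liftOrbit ψ L a ω x n = f̃ⁿ_ω(x)`. -/
def liftOrbit (ψ : ℝ → ℝ) (L a : ℝ) (ω : ℕ → ℝ) (x : ℝ) : ℕ → ℝ
  | 0 => x
  | n + 1 => L * ψ (liftOrbit ψ L a ω x n + ω n) + a

/-- `|(fⁿ_ω)'(x)|`, computed by the chain rule (the mod-1 projection has derivative 1). -/
def derivAbs (ψ : ℝ → ℝ) (L a : ℝ) (ω : ℕ → ℝ) (x : ℝ) (n : ℕ) : ℝ :=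
  ∏ i ∈ Finset.range n, |L * deriv ψ (orbitW ψ L a ω x i + ω i)|

/-- `log |(fⁿ_ω)'(x)|`. -/
def logDerivSum (ψ : ℝ → ℝ) (L a : ℝ) (ω : ℕ → ℝ) (x : ℝ) (n : ℕ) : ℝ :=
  ∑ i ∈ Finset.range n, Real.log |L * deriv ψ (orbitW ψ L a ω x i + ω i)|

/-- `log |(f̃ⁿ_ω)'(x)|` along the lifted orbit. -/
def logDerivSumLift (ψ : ℝ → ℝ) (L a : ℝ) (ω : ℕ → ℝ) (x : ℝ) (n : ℕ) : ℝ :=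
  ∑ i ∈ Finset.range n, Real.log |L * deriv ψ (liftOrbit ψ L a ω x i + ω i)|

/-- The (signed) derivative `(f̃ⁿ_ω)'(x)` of the lifted composition. -/
def derivLift (ψ : ℝ → ℝ) (L a : ℝ) (ω : ℕ → ℝ) (x : ℝ) (n : ℕ) : ℝ :=
  ∏ i ∈ Finset.range n, (L * deriv ψ (liftOrbit ψ L a ω x i + ω i))

/-- The uniform distribution `ν^ε` on `[-ε, ε]`. -/
def unif (ε : ℝ) : Measure ℝ :=
  ENNReal.ofReal (1 / (2 * ε)) • volume.restrict (Icc (-ε) ε)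

/-- `P = ν^{⊗ ℕ}`: the coordinates of `ω` are i.i.d. with law `ν` under `P`. -/
def IsProductOf (P : Measure (ℕ → ℝ)) (ν : Measure ℝ) : Prop :=
  IsProbabilityMeasure P ∧
    ∀ (s : Finset ℕ) (A : ℕ → Set ℝ), (∀ i, MeasurableSet (A i)) →
      P {ω : ℕ → ℝ | ∀ i ∈ s, ω i ∈ A i} = ∏ i ∈ s, ν (A i)

/-- A stationary probability measure for the Markov chain `X_{n+1} = f(X_n + ω_n)` on
`S¹ ≅ [0,1)`. -/
def IsStationaryCircle (ψ : ℝ → ℝ) (L a ε : ℝ) (μ : Measure ℝ) : Prop :=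
  IsProbabilityMeasure μ ∧ μ (Ico (0:ℝ) 1) = 1 ∧
    ∀ A : Set ℝ, MeasurableSet A →
      μ A = ∫⁻ x, unif ε {w : ℝ | cmap ψ L a (x + w) ∈ A} ∂μ

/-- `μ` is supported on all of `S¹`. -/
def FullSupport (μ : Measure ℝ) : Prop :=
  ∀ U : Set ℝ, IsOpen U → (U ∩ Ico (0:ℝ) 1).Nonempty → 0 < μ U

/-- The neighborhood `B(η) = {x : d(x, C'_ψ) ≤ K₁⁻¹ L^η}` of the critical set. -/
def Bset (ψ : ℝ → ℝ) (K₁ L η : ℝ) : Set ℝ := {x : ℝ | dS1Set x (Crit ψ) ≤ K₁⁻¹ * L ^ η}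

/-- `G = S¹ ∖ B(-β)`. -/
def Gset (ψ : ℝ → ℝ) (K₁ L β : ℝ) : Set ℝ := (Bset ψ K₁ L (-β))ᶜ

/-- `B^l` for `0 ≤ l ≤ k` (`B⁰ = I`). -/
def BlSet (ψ : ℝ → ℝ) (K₁ L β : ℝ) (k l : ℕ) : Set ℝ :=
  if l = k then Bset ψ K₁ L (-(k : ℝ) / 2 - β)
  else Bset ψ K₁ L (-(l : ℝ) / 2 - β) \ Bset ψ K₁ L (-((l : ℝ) + 1) / 2 - β)

/-- The shifted set `A_w = A - w`. -/
def shiftSet (A : Set ℝ) (w : ℝ) : Set ℝ := {x : ℝ | x + w ∈ A}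
/-! ## The partition `R` into connected components of `G, B⁰, …, B^k`. -/

open scoped Classical in
/-- The element of `{G, B⁰, …, B^k}` containing `x`. -/
def pieceOf (ψ : ℝ → ℝ) (K₁ L β : ℝ) (k : ℕ) (x : ℝ) : Set ℝ :=
  if x ∈ Gset ψ K₁ L β then Gset ψ K₁ L β
  else if h : ∃ l : ℕ, l ≤ k ∧ x ∈ BlSet ψ K₁ L β k l then BlSet ψ K₁ L β k h.choose
  else ∅

/-- The atom of the partition `R` containing `x`: the connected component of the piece of
`{G, B⁰, …, B^k}` containing `x`. -/
def atomR (ψ : ℝ → ℝ) (K₁ L β : ℝ) (k : ℕ) (x : ℝ) : Set ℝ :=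
  connectedComponentIn (pieceOf ψ K₁ L β k x) x

/-- Length of a subset of `ℝ`. -/
def sLen (S : Set ℝ) : ℝ := (volume S).toReal

/-- The atom of the shifted partition `R_w` containing `z`. -/
def atomRshift (ψ : ℝ → ℝ) (K₁ L β : ℝ) (k : ℕ) (w z : ℝ) : Set ℝ :=
  {t : ℝ | t + w ∈ atomR ψ K₁ L β k (z + w)}

/-- `J` is a longest atom of `R_w` restricted to `Jbar`. -/
def IsLongestAtom (ψ : ℝ → ℝ) (K₁ L β : ℝ) (k : ℕ) (w : ℝ) (Jbar J : Set ℝ) : Prop :=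
  (∃ z ∈ Jbar, J = atomRshift ψ K₁ L β k w z ∩ Jbar) ∧
    ∀ z ∈ Jbar, sLen (atomRshift ψ K₁ L β k w z ∩ Jbar) ≤ sLen J

/-- The random interval process `(J_i, J̄_i)` of Section 3.2:
`J₀ = X₀ + [-ε,ε]`, `J̄₁ = f̃(J₀)`, and for `i ≥ 1`, `J_i` is a longest atom of `R_{ω_i}|_{J̄_i}`
and `J̄_{i+1} = f̃_{ω_i}(J_i)`. -/
def IntervalProc (ψ : ℝ → ℝ) (L a K₁ β ε : ℝ) (k : ℕ) (X₀ : ℝ) (ω : ℕ → ℝ)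
    (J Jbar : ℕ → Set ℝ) : Prop :=
  J 0 = Icc (X₀ - ε) (X₀ + ε) ∧
    Jbar 1 = (fun x : ℝ => L * ψ x + a) '' J 0 ∧
    ∀ i : ℕ, 1 ≤ i →
      IsLongestAtom ψ K₁ L β k (ω i) (Jbar i) (J i) ∧
        Jbar (i + 1) = (fun x : ℝ => L * ψ (x + ω i) + a) '' J i

/-! ## The partition `𝒫` of Section 4.1 and the merged partitions `𝒫_ω(I)`. -/

/-- A partition `𝒫` of `S¹` (regarded 1-periodically on `ℝ`) as in Section 4.1(A):
atoms are intervals subordinate to `{G, B⁰, …, B^k}`; on `G` and `B^k` the atoms are the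
connected components, and each component of `B^l` (`l < k`) is divided into intervals of
length in `[(l+1)⁻² L^{-(l+3)/2-β}, 2(l+1)⁻² L^{-(l+3)/2-β}]`. -/
structure GoodPartition (ψ : ℝ → ℝ) (K₁ L β : ℝ) (k : ℕ) (PP : Set (Set ℝ)) : Prop where
  nonempty : ∀ C ∈ PP, C.Nonempty
  interval : ∀ C ∈ PP, C.OrdConnected
  disj : PP.PairwiseDisjoint id
  cover : ⋃₀ PP = univ
  periodic : ∀ C ∈ PP, (fun x : ℝ => x + 1) '' C ∈ PP
  subordinate : ∀ C ∈ PP, C ⊆ Gset ψ K₁ L β ∨ ∃ l ≤ k, C ⊆ BlSet ψ K₁ L β k l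
  g_atoms : ∀ C ∈ PP, C ⊆ Gset ψ K₁ L β → ∀ x ∈ C,
    C = connectedComponentIn (Gset ψ K₁ L β) x
  bk_atoms : ∀ C ∈ PP, C ⊆ BlSet ψ K₁ L β k k → ∀ x ∈ C,
    C = connectedComponentIn (BlSet ψ K₁ L β k k) x
  bl_len : ∀ C ∈ PP, ∀ l : ℕ, l < k → C ⊆ BlSet ψ K₁ L β k l →
    (((l : ℝ) + 1) ^ 2)⁻¹ * L ^ (-((l : ℝ) + 3) / 2 - β) ≤ sLen C ∧
      sLen C ≤ 2 * (((l : ℝ) + 1) ^ 2)⁻¹ * L ^ (-((l : ℝ) + 3) / 2 - β)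

/-- The non-singleton atoms of the shifted partition `𝒫_w` restricted to `I`. -/
def restAtoms (PP : Set (Set ℝ)) (w : ℝ) (I : Set ℝ) : Set (Set ℝ) :=
  {A : Set ℝ | (∃ C ∈ PP, A = ((fun x : ℝ => x - w) '' C) ∩ I) ∧ A.Nontrivial}

/-- `A` lies (weakly) to the left of `B`. -/
def setBefore (A B : Set ℝ) : Prop := ∀ a ∈ A, ∀ b ∈ B, a ≤ b

/-- `A` is one of the two leftmost members of `𝒜`. -/
def TwoLeft (𝒜 : Set (Set ℝ)) (A : Set ℝ) : Prop :=
  A ∈ 𝒜 ∧ {B ∈ 𝒜 | B ≠ A ∧ setBefore B A}.Subsingleton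

/-- `A` is one of the two rightmost members of `𝒜`. -/
def TwoRight (𝒜 : Set (Set ℝ)) (A : Set ℝ) : Prop :=
  A ∈ 𝒜 ∧ {B ∈ 𝒜 | B ≠ A ∧ setBefore A B}.Subsingleton

/-- `𝒜` has at least four members. -/
def AtLeastFour (𝒜 : Set (Set ℝ)) : Prop :=
  ∃ s : Finset (Set ℝ), ↑s ⊆ 𝒜 ∧ s.card = 4

/-- `S` is an atom of the merged partition `𝒫_w(I)` (whose atoms `𝒜 = restAtoms PP w I`
are merged at the two ends, and which is trivial if `N ≤ 3`). -/
def MergedAtom (𝒜 : Set (Set ℝ)) (I S : Set ℝ) : Prop :=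
  (¬ AtLeastFour 𝒜 ∧ S = I) ∨
    (AtLeastFour 𝒜 ∧
      ((∃ A B : Set ℝ, A ∈ 𝒜 ∧ B ∈ 𝒜 ∧ A ≠ B ∧ TwoLeft 𝒜 A ∧ TwoLeft 𝒜 B ∧ S = A ∪ B) ∨
        (∃ A B : Set ℝ, A ∈ 𝒜 ∧ B ∈ 𝒜 ∧ A ≠ B ∧ TwoRight 𝒜 A ∧ TwoRight 𝒜 B ∧ S = A ∪ B) ∨
        (S ∈ 𝒜 ∧ ¬ TwoLeft 𝒜 S ∧ ¬ TwoRight 𝒜 S)))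

/-! ## Itineraries (Section 4.1(B),(C)). -/

/-- The image `f̃ʲ_ω(A)`. -/
def Fim (ψ : ℝ → ℝ) (L a : ℝ) (ω : ℕ → ℝ) (j : ℕ) (A : Set ℝ) : Set ℝ :=
  (fun x : ℝ => liftOrbit ψ L a ω x j) '' A

/-- `C 0 ⊇ C 1 ⊇ ⋯ ⊇ C n` is a chain of itinerary atoms: `C i ∈ 𝒬_i` for `i ≤ n`. -/
def AtomChain (ψ : ℝ → ℝ) (L a : ℝ) (PP : Set (Set ℝ)) (ω : ℕ → ℝ) (I : Set ℝ)
    (n : ℕ) (C : ℕ → Set ℝ) : Prop :=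
  MergedAtom (restAtoms PP (ω 0) I) I (C 0) ∧
    ∀ i : ℕ, i < n →
      ∃ S : Set ℝ,
        MergedAtom (restAtoms PP (ω (i + 1)) (Fim ψ L a ω (i + 1) (C i)))
            (Fim ψ L a ω (i + 1) (C i)) S ∧
          C (i + 1) = C i ∩ (fun x : ℝ => liftOrbit ψ L a ω x (i + 1)) ⁻¹' S

/-- `τ ≥ n` on the chain `C`: no near-visit to `B^k` before time `n`. -/
def ChainTauGE (ψ : ℝ → ℝ) (K₁ L a β : ℝ) (k : ℕ) (ω : ℕ → ℝ) (C : ℕ → Set ℝ)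
    (n : ℕ) : Prop :=
  ∀ i : ℕ, i < n → Fim ψ L a ω i (C i) ∩ shiftSet (BlSet ψ K₁ L β k k) (ω i) = ∅

/-- The chain `C` is bound at time `t`: `t ∈ [t_j + 1, t_j + p_j]` for some bound period. -/
def ChainBoundAt (ψ : ℝ → ℝ) (K₁ L a β : ℝ) (k : ℕ) (ω : ℕ → ℝ) (C : ℕ → Set ℝ)
    (t : ℕ) : Prop :=
  ∃ s : ℕ, s < t ∧ ∃ l : ℕ, 1 ≤ l ∧ l ≤ k ∧
    (Fim ψ L a ω s (C s) ∩ shiftSet (BlSet ψ K₁ L β k l) (ω s)).Nonempty ∧ t ≤ s + l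

/-! ## The supporting interval process `(I_n)` of Section 5.1. -/

open scoped Classical in
/-- The shift used when mapping `I_n` forward: `0` if `I_n` is a fresh noise interval
(`n = 0` or `n - 1` was a near-visit to `B^k`), and `ω_n` otherwise. -/
def stepShift (ψ : ℝ → ℝ) (K₁ L β : ℝ) (k : ℕ) (ω : ℕ → ℝ) (I : ℕ → Set ℝ) : ℕ → ℝ
  | 0 => 0
  | n + 1 =>
    if (I n ∩ shiftSet (BlSet ψ K₁ L β k k) (ω n)).Nonempty then 0 else ω (n + 1)

/-- The supporting interval process `(I_n)` of Section 5.1: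
`I₀ = X̃₀ + [-ε,ε]`; if `I_n` meets `B^k_{ω_n}` then `I_{n+1} = X̃_{n+1} + [-ε,ε]`, and
otherwise `I_{n+1}` is the atom of `𝒫_{ω_{n+1}}(f̃_{(·)}(I_n))` containing `X̃_{n+1}`. -/
def SuppProc (ψ : ℝ → ℝ) (L a K₁ β ε : ℝ) (k : ℕ) (PP : Set (Set ℝ)) (X₀ : ℝ)
    (ω : ℕ → ℝ) (I : ℕ → Set ℝ) : Prop :=
  I 0 = Icc (X₀ - ε) (X₀ + ε) ∧
    ∀ n : ℕ,
      ((I n ∩ shiftSet (BlSet ψ K₁ L β k k) (ω n)).Nonempty →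
          I (n + 1) =
            Icc (liftOrbit ψ L a ω X₀ (n + 1) - ε) (liftOrbit ψ L a ω X₀ (n + 1) + ε)) ∧
      (¬ (I n ∩ shiftSet (BlSet ψ K₁ L β k k) (ω n)).Nonempty →
          MergedAtom
              (restAtoms PP (ω (n + 1))
                ((fun x : ℝ => L * ψ (x + stepShift ψ K₁ L β k ω I n) + a) '' I n))
              ((fun x : ℝ => L * ψ (x + stepShift ψ K₁ L β k ω I n) + a) '' I n)
              (I (n + 1)) ∧
            liftOrbit ψ L a ω X₀ (n + 1) ∈ I (n + 1))

/-- `τ_j = m` for the supporting interval process: `I_m` meets `B^k_{ω_m}`, `m ≥ 1`, and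
exactly `j - 1` earlier positive times do so. -/
def TauEq (ψ : ℝ → ℝ) (K₁ L β : ℝ) (k : ℕ) (ω : ℕ → ℝ) (I : ℕ → Set ℝ)
    (j m : ℕ) : Prop :=
  0 < m ∧ (I m ∩ shiftSet (BlSet ψ K₁ L β k k) (ω m)).Nonempty ∧
    ∃ s : Finset ℕ,
      (∀ i : ℕ, i ∈ s ↔
        (0 < i ∧ i < m ∧ (I i ∩ shiftSet (BlSet ψ K₁ L β k k) (ω i)).Nonempty)) ∧
      s.card = j - 1
lemma sink_round_min (r : ℝ) (j : ℤ) : |r - round r| ≤ |r - j| := by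
  rcases eq_or_ne j (round r) with h | h
  · rw [h]
  · have h1 : (1:ℝ) ≤ |(round r : ℝ) - (j:ℝ)| := by
      have h2 : (1:ℤ) ≤ |round r - j| := Int.one_le_abs (sub_ne_zero.mpr (Ne.symm h))
      exact_mod_cast h2
    have h2 : |r - round r| ≤ 1/2 := abs_sub_round r
    have h3 : |(round r : ℝ) - j| ≤ |(round r:ℝ) - r| + |r - j| := abs_sub_le _ _ _
    have h4 : |(round r:ℝ) - r| = |r - round r| := abs_sub_comm _ _
    linarith

lemma dS1_nonneg' (x y : ℝ) : 0 ≤ dS1 x y := abs_nonneg _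

lemma dS1_le_int (x y : ℝ) (j : ℤ) : dS1 x y ≤ |x - y - j| := sink_round_min _ j

lemma dS1_fract (A B : ℝ) : dS1 (Int.fract A) (Int.fract B) ≤ |A - B| := by
  have h := dS1_le_int (Int.fract A) (Int.fract B) (⌊B⌋ - ⌊A⌋)
  have h2 : Int.fract A - Int.fract B - ((⌊B⌋ - ⌊A⌋ : ℤ) : ℝ) = A - B := by
    rw [Int.fract, Int.fract]; push_cast; ring
  rwa [h2] at h

lemma dS1_shift (x y t : ℝ) : dS1 (x + t) y ≤ dS1 x y + |t| := by
  have h := dS1_le_int (x+t) y (round (x - y))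
  have h2 : x + t - y - (round (x-y):ℝ) = (x - y - round (x-y)) + t := by ring
  rw [h2] at h
  exact h.trans (abs_add_le _ _)

lemma sink_lip {g : ℝ → ℝ} (hg : Differentiable ℝ g) {C : ℝ}
    (hb : ∀ x, |deriv g x| ≤ C) (u v : ℝ) : |g u - g v| ≤ C * |u - v| := by
  have h := convex_univ.norm_image_sub_le_of_norm_deriv_le (f := g)
    (fun x _ => hg x) (fun x _ => hb x) (Set.mem_univ v) (Set.mem_univ u)
  simpa [Real.norm_eq_abs] using h


set_option maxHeartbeats 1000000 in
/-- The key estimates in the proof of Proposition 3.1.  Assume (H4) and `L > 2`; let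
`f^{k+1}(xh) = xh` with `xh ∈ C'_ψ`, `0 < γ ≤ 1/49` and `0 < ε ≤ γ L^{-(2k+1)}`, and let
`U = {d(·, xh) ≤ √γ L^{-(k+1)}}`.  Then for every sample `ω`: (i) `|(f^{k+1}_ω)'(z)| ≤ 2√γ <
1/2` on `U`; (ii) `d(f^{k+1}_ω(z), xh) ≤ 7γ L^{-(k+1)}` on `U`; in particular
`f^{k+1}_ω(U) ⊆ U`. -/
theorem sink_estimates (ψ : ℝ → ℝ) (hper : Function.Periodic ψ 1) (hsm : ContDiff ℝ 2 ψ)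
    (h1 : H1 ψ) (h2 : H2 ψ) (hH4 : H4 ψ)
    (L a : ℝ) (hL : 2 < L) (ha : a ∈ Ico (0:ℝ) 1)
    (k : ℕ) (hk : 1 ≤ k) (xh : ℝ) (hxh : xh ∈ Crit ψ ∩ Ico (0:ℝ) 1)
    (hper' : detIter ψ L a xh (k + 1) = xh)
    (γ ε : ℝ) (hγ : 0 < γ) (hγ' : γ ≤ 1 / 49)
    (hε : 0 < ε) (hε' : ε ≤ γ * L ^ (-(2 * (k : ℝ) + 1)))
    (ω : ℕ → ℝ) (hω : ∀ i, |ω i| ≤ ε) :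
    ∀ z : ℝ, dS1 z xh ≤ Real.sqrt γ * L ^ (-((k : ℝ) + 1)) →
      (derivAbs ψ L a ω z (k + 1) ≤ 2 * Real.sqrt γ ∧ 2 * Real.sqrt γ < 1 / 2) ∧
        dS1 (orbitW ψ L a ω z (k + 1)) xh ≤ 7 * γ * L ^ (-((k : ℝ) + 1)) ∧
        dS1 (orbitW ψ L a ω z (k + 1)) xh ≤ Real.sqrt γ * L ^ (-((k : ℝ) + 1)) := by
  intro z hz
  have hcrit : deriv ψ xh = 0 := hxh.1
  have hL0 : (0:ℝ) < L := by linarith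
  have hL1 : (1:ℝ) ≤ L := by linarith
  -- smoothness
  have hd1 : Differentiable ℝ ψ := hsm.differentiable (by norm_num)
  have hd2 : Differentiable ℝ (deriv ψ) := by
    have h2' : ContDiff ℝ ((1:ℕ) + 1) ψ := by exact_mod_cast hsm
    exact (contDiff_succ_iff_deriv.mp h2').2.2.differentiable one_ne_zero
  -- periodicity of deriv
  have hψint : ∀ (u:ℝ) (m:ℤ), ψ (u + m) = ψ u := fun u m => by
    simpa using (hper.int_mul m) u
  have hperd : Function.Periodic (deriv ψ) 1 := by
    intro u
    have h1 : (fun y => ψ (y + 1)) = ψ := funext fun y => hper y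
    calc deriv ψ (u + 1) = deriv (fun y => ψ (y + 1)) u := (deriv_comp_add_const ψ 1 u).symm
      _ = deriv ψ u := by rw [h1]
  have hψ'int : ∀ (u:ℝ) (m:ℤ), deriv ψ (u + m) = deriv ψ u := fun u m => by
    simpa using (hperd.int_mul m) u
  -- Lipschitz estimates
  have lipψ : ∀ u v, |ψ u - ψ v| ≤ 1/10 * |u - v| := sink_lip hd1 hH4.1
  have lipψ' : ∀ u v, |deriv ψ u - deriv ψ v| ≤ 1/10 * |u - v| := sink_lip hd2 hH4.2
  have lipc : ∀ u v, |ψ u - ψ v| ≤ 1/10 * dS1 u v := by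
    intro u v
    have h1 : ψ (v + ((round (u - v) : ℤ) : ℝ)) = ψ v := hψint v _
    calc |ψ u - ψ v| = |ψ u - ψ (v + ((round (u-v):ℤ):ℝ))| := by rw [h1]
      _ ≤ 1/10 * |u - (v + ((round (u-v):ℤ):ℝ))| := lipψ _ _
      _ = 1/10 * dS1 u v := by rw [dS1]; congr 1; push_cast; ring
  have dnear : ∀ u, |deriv ψ u| ≤ 1/10 * dS1 u xh := by
    intro u
    have h0 : deriv ψ (xh + ((round (u - xh) : ℤ):ℝ)) = 0 := by
      rw [hψ'int]; exact hcrit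
    calc |deriv ψ u| = |deriv ψ u - deriv ψ (xh + ((round (u-xh):ℤ):ℝ))| := by
          rw [h0, sub_zero]
      _ ≤ 1/10 * |u - (xh + ((round (u-xh):ℤ):ℝ))| := lipψ' _ _
      _ = 1/10 * dS1 u xh := by rw [dS1]; congr 1; push_cast; ring
  have quad : ∀ u, |ψ u - ψ xh| ≤ 1/10 * (dS1 u xh)^2 := by
    intro u
    have hd0 : 0 ≤ dS1 u xh := dS1_nonneg' u xh
    have hψv : ψ (xh + ((round (u - xh):ℤ):ℝ)) = ψ xh := hψint xh _
    have huv : |u - (xh + ((round (u - xh):ℤ):ℝ))| = dS1 u xh := by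
      rw [dS1]; congr 1; push_cast; ring
    have hball : ∀ t ∈ Metric.closedBall (xh + ((round (u - xh):ℤ):ℝ)) (dS1 u xh),
        |deriv ψ t| ≤ 1/10 * dS1 u xh := by
      intro t ht
      have h0 : deriv ψ (xh + ((round (u - xh):ℤ):ℝ)) = 0 := by
        rw [hψ'int]; exact hcrit
      have hlt := lipψ' t (xh + ((round (u - xh):ℤ):ℝ))
      rw [h0, sub_zero] at hlt
      have h2 : |t - (xh + ((round (u - xh):ℤ):ℝ))| ≤ dS1 u xh := by
        have := Metric.mem_closedBall.mp ht
        rwa [Real.dist_eq] at this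
      nlinarith
    have hu : u ∈ Metric.closedBall (xh + ((round (u - xh):ℤ):ℝ)) (dS1 u xh) := by
      rw [Metric.mem_closedBall, Real.dist_eq, huv]
    have hvm : (xh + ((round (u - xh):ℤ):ℝ)) ∈
        Metric.closedBall (xh + ((round (u - xh):ℤ):ℝ)) (dS1 u xh) :=
      Metric.mem_closedBall_self hd0
    have hmvt := (convex_closedBall (xh + ((round (u - xh):ℤ):ℝ)) (dS1 u xh)).norm_image_sub_le_of_norm_deriv_le
        (fun t _ => hd1 t) hball hvm hu
    rw [← hψv]
    have h3 : |ψ u - ψ (xh + ((round (u - xh):ℤ):ℝ))| ≤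
        (1/10 * dS1 u xh) * |u - (xh + ((round (u - xh):ℤ):ℝ))| := by
      simpa [Real.norm_eq_abs] using hmvt
    rw [huv] at h3
    nlinarith
  -- abbreviations
  set s := Real.sqrt γ with hs
  set Lp := L ^ (-((k:ℝ)+1)) with hLpdef
  have hs0 : 0 < s := Real.sqrt_pos.mpr hγ
  have hs7 : s ≤ 1/7 := by
    rw [hs]
    have h1 : Real.sqrt γ ≤ Real.sqrt (1/49) := Real.sqrt_le_sqrt hγ'
    rwa [show (1/49:ℝ) = (1/7)^2 by norm_num,
      Real.sqrt_sq (by norm_num : (0:ℝ) ≤ 1/7)] at h1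
  have hsγ : s * s = γ := Real.mul_self_sqrt hγ.le
  have hLp0 : 0 < Lp := Real.rpow_pos_of_pos hL0 _
  have hP : (L:ℝ)^(k+1) * Lp = 1 := by
    rw [hLpdef, ← Real.rpow_natCast L (k+1), ← Real.rpow_add hL0]
    rw [show (((k+1:ℕ):ℝ) + -((k:ℝ)+1)) = 0 by push_cast; ring, Real.rpow_zero]
  have hQ : L ^ (-(2*(k:ℝ)+1)) * (L:ℝ)^k = Lp := by
    rw [hLpdef, ← Real.rpow_natCast L k, ← Real.rpow_add hL0]
    congr 1; push_cast; ring
  have hQle : L ^ (-(2*(k:ℝ)+1)) ≤ Lp := by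
    rw [hLpdef]
    apply Real.rpow_le_rpow_of_exponent_le hL1
    have : (0:ℝ) ≤ (k:ℝ) := Nat.cast_nonneg k
    linarith
  have hεLp : ε ≤ s * Lp / 7 := by
    have h1 : ε ≤ γ * Lp := by
      refine hε'.trans ?_
      exact mul_le_mul_of_nonneg_left hQle hγ.le
    nlinarith [hs0.le, hLp0.le]
  have hre : dS1 z xh + ε ≤ 8/7 * (s * Lp) := by linarith
  -- orbit step equation
  have orbE : ∀ (w : ℕ → ℝ) (u : ℝ) (n : ℕ),
      orbitW ψ L a w u (n+1) = Int.fract (L * ψ (orbitW ψ L a w u n + w n) + a) :=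
    fun w u n => by rw [orbitW, cmap]
  have h00 : orbitW ψ L a ω z 0 = z := rfl
  have h00' : orbitW ψ L a (fun _ => 0) xh 0 = xh := rfl
  have hω0 : |ω 0| ≤ ε := hω 0
  have hd1z : dS1 (z + ω 0) xh ≤ 8/7 * (s*Lp) := by
    have := dS1_shift z xh (ω 0)
    linarith
  -- first step
  have D1 : dS1 (orbitW ψ L a ω z 1) (orbitW ψ L a (fun _ => 0) xh 1) ≤
      L/10 * (8/7*(s*Lp))^2 := by
    rw [orbE, orbE, h00, h00']
    refine (dS1_fract _ _).trans ?_
    rw [add_zero, show L * ψ (z + ω 0) + a - (L * ψ xh + a) = L * (ψ (z + ω 0) - ψ xh) by ring,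
      abs_mul, abs_of_pos hL0]
    have hq := quad (z + ω 0)
    have h3 : (dS1 (z + ω 0) xh)^2 ≤ (8/7*(s*Lp))^2 := by
      nlinarith [dS1_nonneg' (z + ω 0) xh]
    nlinarith [abs_nonneg (ψ (z + ω 0) - ψ xh)]
  -- general step
  have step : ∀ n, dS1 (orbitW ψ L a ω z (n+1)) (orbitW ψ L a (fun _ => 0) xh (n+1)) ≤
      L/10 * (dS1 (orbitW ψ L a ω z n) (orbitW ψ L a (fun _ => 0) xh n) + ε) := by
    intro n
    rw [orbE, orbE]
    refine (dS1_fract _ _).trans ?_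
    set X := orbitW ψ L a ω z n
    set Y := orbitW ψ L a (fun _ => 0) xh n
    rw [add_zero, show L * ψ (X + ω n) + a - (L * ψ Y + a) = L * (ψ (X + ω n) - ψ Y) by ring,
      abs_mul, abs_of_pos hL0]
    have h2 := lipc (X + ω n) Y
    have h3 := dS1_shift X Y (ω n)
    have h4 := hω n
    have h5 := dS1_nonneg' X Y
    nlinarith [abs_nonneg (ψ (X + ω n) - ψ Y)]
  -- induction
  have geom1 : ∀ j : ℕ, (1:ℝ) ≤ (L/2)^j := fun j => one_le_pow₀ (by linarith)
  have C0 : (0:ℝ) ≤ L/10 * (8/7*(s*Lp))^2 := by positivity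
  have main : ∀ j : ℕ, dS1 (orbitW ψ L a ω z (j+1)) (orbitW ψ L a (fun _ => 0) xh (j+1)) ≤
      (L/10)^j * (L/10 * (8/7*(s*Lp))^2) + ε * (L/2)^j / 4 := by
    intro j
    induction j with
    | zero => simp only [pow_zero, one_mul]; linarith [D1]
    | succ j ih =>
      have h1 := step (j+1)
      have ht := geom1 j
      have hpow : (0:ℝ) ≤ (L/10)^j := by positivity
      calc dS1 (orbitW ψ L a ω z (j+1+1)) (orbitW ψ L a (fun _ => 0) xh (j+1+1)) ≤
          L/10 * (dS1 (orbitW ψ L a ω z (j+1)) (orbitW ψ L a (fun _ => 0) xh (j+1)) + ε) := h1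
        _ ≤ L/10 * (((L/10)^j * (L/10 * (8/7*(s*Lp))^2) + ε * (L/2)^j / 4) + ε) := by
            have := mul_le_mul_of_nonneg_left (add_le_add ih (le_refl ε))
              (by positivity : (0:ℝ) ≤ L/10)
            exact this
        _ ≤ (L/10)^(j+1) * (L/10 * (8/7*(s*Lp))^2) + ε * (L/2)^(j+1) / 4 := by
            have hp1 : (L/10:ℝ)^(j+1) = (L/10)^j * (L/10) := pow_succ _ _
            have hp2 : (L/2:ℝ)^(j+1) = (L/2)^j * (L/2) := pow_succ _ _
            rw [hp1, hp2]
            nlinarith [mul_nonneg (mul_nonneg hL0.le hε.le) (sub_nonneg.mpr ht),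
              mul_nonneg hpow C0]
  have hyk : orbitW ψ L a (fun _ => 0) xh (k+1) = xh := hper'
  have hDfin := main k
  rw [hyk] at hDfin
  -- numerics
  have hA : (L/10:ℝ)^(k+1) ≤ (L:ℝ)^(k+1)/10 := by
    rw [div_pow]
    gcongr
    calc (10:ℝ) = 10^1 := (pow_one 10).symm
      _ ≤ 10^(k+1) := pow_le_pow_right₀ (by norm_num) (by omega)
  have hsq : (8/7*(s*Lp))^2 = 64/49 * γ * (Lp*Lp) := by rw [← hsγ]; ring
  have e1 : (L/10)^k * (L/10 * (8/7*(s*Lp))^2) ≤ (64/490) * γ * Lp := by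
    calc (L/10)^k * (L/10 * (8/7*(s*Lp))^2) = (L/10)^(k+1) * (64/49*γ*(Lp*Lp)) := by
          rw [hsq, pow_succ]; ring
      _ ≤ ((L:ℝ)^(k+1)/10) * (64/49*γ*(Lp*Lp)) :=
          mul_le_mul_of_nonneg_right hA
            (mul_nonneg (mul_nonneg (by norm_num) hγ.le) (mul_nonneg hLp0.le hLp0.le))
      _ = (64/490)*γ*Lp * ((L:ℝ)^(k+1) * Lp) := by ring
      _ = (64/490)*γ*Lp := by rw [hP, mul_one]
  have e2 : ε * (L/2)^k / 4 ≤ γ * Lp / 4 := by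
    have h1 : (L/2:ℝ)^k ≤ (L:ℝ)^k := by
      rw [div_pow]
      exact div_le_self (by positivity) (one_le_pow₀ (by norm_num))
    calc ε * (L/2)^k / 4 ≤ (γ * L ^ (-(2*(k:ℝ)+1))) * (L:ℝ)^k / 4 := by
          have := mul_le_mul hε' h1 (by positivity) (by positivity)
          linarith
      _ = γ * (L ^ (-(2*(k:ℝ)+1)) * (L:ℝ)^k) / 4 := by ring
      _ = γ * Lp / 4 := by rw [hQ]
  have hD : dS1 (orbitW ψ L a ω z (k+1)) xh ≤ (64/490)*γ*Lp + γ*Lp/4 :=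
    hDfin.trans (add_le_add e1 e2)
  -- derivative product
  have hprod : derivAbs ψ L a ω z (k+1) =
      (∏ i ∈ Finset.range k, |L * deriv ψ (orbitW ψ L a ω z (i+1) + ω (i+1))|) *
        |L * deriv ψ (orbitW ψ L a ω z 0 + ω 0)| := by
    rw [derivAbs, Finset.prod_range_succ']
  have hprod1 : (∏ i ∈ Finset.range k, |L * deriv ψ (orbitW ψ L a ω z (i+1) + ω (i+1))|) ≤
      (L/10)^k := by
    calc (∏ i ∈ Finset.range k, |L * deriv ψ (orbitW ψ L a ω z (i+1) + ω (i+1))|) ≤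
        ∏ _i ∈ Finset.range k, (L/10) := by
          apply Finset.prod_le_prod (fun i _ => abs_nonneg _)
          intro i _
          rw [abs_mul, abs_of_pos hL0]
          have := hH4.1 (orbitW ψ L a ω z (i+1) + ω (i+1))
          nlinarith
      _ = (L/10)^k := by rw [Finset.prod_const, Finset.card_range]
  have h0term : |L * deriv ψ (orbitW ψ L a ω z 0 + ω 0)| ≤ L/10 * (8/7*(s*Lp)) := by
    rw [h00, abs_mul, abs_of_pos hL0]
    have hdn := dnear (z + ω 0)
    nlinarith [abs_nonneg (deriv ψ (z + ω 0))]
  have hder : derivAbs ψ L a ω z (k+1) ≤ 2*s := by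
    rw [hprod]
    calc (∏ i ∈ Finset.range k, |L * deriv ψ (orbitW ψ L a ω z (i+1) + ω (i+1))|) *
        |L * deriv ψ (orbitW ψ L a ω z 0 + ω 0)| ≤ (L/10)^k * (L/10 * (8/7*(s*Lp))) := by
          apply mul_le_mul hprod1 h0term (abs_nonneg _) (by positivity)
      _ = (L/10)^(k+1) * (8/7*(s*Lp)) := by rw [pow_succ]; ring
      _ ≤ ((L:ℝ)^(k+1)/10) * (8/7*(s*Lp)) :=
          mul_le_mul_of_nonneg_right hA
            (mul_nonneg (by norm_num) (mul_nonneg hs0.le hLp0.le))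
      _ = (8/70)*s * ((L:ℝ)^(k+1)*Lp) := by ring
      _ = (8/70)*s := by rw [hP, mul_one]
      _ ≤ 2*s := by nlinarith [hs0.le]
  refine ⟨⟨hder, by linarith⟩, ?_, ?_⟩
  · linarith [hD, mul_nonneg hγ.le hLp0.le]
  · have h8 : 0 ≤ s * Lp := mul_nonneg hs0.le hLp0.le
    have h7 : γ * Lp ≤ (1/7) * (s*Lp) := by
      calc γ * Lp = s * (s*Lp) := by rw [← hsγ]; ring
        _ ≤ (1/7) * (s*Lp) := mul_le_mul_of_nonneg_right hs7 h8
    linarith [hD, h7, h8]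
end
end

section
/- There exists L₀ = L₀(β, c, ψ) > 0 (independent of k) such that for all L ≥ L₀ the following holds. Let k ∈ ℕ, assume f = f_{L,a} satisfies (H3)_{c,k}, and let 0 < ε < L^{−max{k−1, 1/2} − β}. Then: (i) f^i(x̂) ∈ G for every x̂ ∈ C'_ψ and every 1 ≤ i ≤ k; (ii) for every ω ∈ Ω, every 1 ≤ l ≤ k and every x ∈ B^l_{ω₀}, one has f^i_ω(x) ∈ G for all 1 ≤ i ≤ l, and |(f^l_{θω})'(f_{ω₀}(x))| ≥ L^{l(1−β)}, where θω := (ω₁, ω₂, …); (iii) if moreover 1 ≤ l < k, then |f_{ω₀}'(x)| ≥ L^{1−(l+1)/2−β}, and hence |(f^{l+1}_ω)'(x)| ≥ L^{(l+1)(1/2−β)}. -/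
open MeasureTheory Set Filter Topology

noncomputable section

/-- A stationary probability measure for the Markov chain `X_{n+1} = f(X_n + ω_n)` on
`S¹ ≅ [0,1)`. -/
def IsStationaryChain (ψ : ℝ → ℝ) (L a ε : ℝ) (μ : Measure ℝ) : Prop :=
  IsProbabilityMeasure μ ∧ μ (Ico (0:ℝ) 1) = 1 ∧
    ∀ A : Set ℝ, MeasurableSet A →
      μ A = ∫⁻ x, unif ε {w : ℝ | cmap ψ L a (x + w) ∈ A} ∂μ

/-! ## Auxiliary lemmas for `lemma_expansion`. -/

namespace AuxExp

lemma round_min (t : ℝ) (m : ℤ) : |t - round t| ≤ |t - (m : ℝ)| := by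
  rcases eq_or_ne m (round t) with h | h
  · subst h; exact le_refl _
  · have h1 : (1 : ℝ) ≤ |(round t : ℝ) - (m : ℝ)| := by
      have : (1 : ℤ) ≤ |round t - m| := Int.one_le_abs (sub_ne_zero.mpr (Ne.symm h))
      calc (1:ℝ) = ((1:ℤ):ℝ) := by norm_num
        _ ≤ ((|round t - m| : ℤ) : ℝ) := by exact_mod_cast this
        _ = |(round t : ℝ) - (m : ℝ)| := by push_cast; ring_nf
    have h2 : |t - round t| ≤ 1 / 2 := abs_sub_round t
    have h3 : |(round t : ℝ) - m| ≤ |(round t:ℝ) - t| + |t - m| := abs_sub_le _ _ _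
    have h4 : |(round t : ℝ) - t| = |t - round t| := abs_sub_comm _ _
    linarith

lemma dS1_nonneg (x y : ℝ) : 0 ≤ dS1 x y := abs_nonneg _

lemma dS1_le_int (x y : ℝ) (m : ℤ) : dS1 x y ≤ |x - y - (m : ℝ)| := round_min (x - y) m

lemma dS1_le_abs (x y : ℝ) : dS1 x y ≤ |x - y| := by simpa using dS1_le_int x y 0

lemma dS1_symm (x y : ℝ) : dS1 x y = dS1 y x := by
  have key : ∀ u v : ℝ, dS1 u v ≤ dS1 v u := by
    intro u v
    calc dS1 u v ≤ |u - v - ((-(round (v - u)) : ℤ) : ℝ)| := dS1_le_int u v _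
      _ = |-(v - u - (round (v - u) : ℝ))| := by push_cast; ring_nf
      _ = dS1 v u := by rw [abs_neg]; rfl
  exact le_antisymm (key x y) (key y x)

lemma dS1_triangle (x y z : ℝ) : dS1 x z ≤ dS1 x y + dS1 y z := by
  calc dS1 x z ≤ |x - z - ((round (x - y) + round (y - z) : ℤ) : ℝ)| := dS1_le_int x z _
    _ = |(x - y - (round (x - y):ℝ)) + (y - z - (round (y - z):ℝ))| := by push_cast; ring_nf
    _ ≤ |x - y - (round (x - y):ℝ)| + |y - z - (round (y - z):ℝ)| := abs_add_le _ _
    _ = dS1 x y + dS1 y z := rfl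

lemma dS1_add_int (x y : ℝ) (n : ℤ) : dS1 (x + n) y = dS1 x y := by
  unfold dS1
  rw [show x + (n : ℝ) - y = (x - y) + (n:ℤ) by push_cast; ring, round_add_intCast]
  push_cast; ring_nf

lemma dS1_fract (x y : ℝ) : dS1 (Int.fract x) y = dS1 x y := by
  have h : Int.fract x = x + ((-⌊x⌋ : ℤ) : ℝ) := by rw [Int.fract]; push_cast; ring
  rw [h, dS1_add_int]

lemma dS1_fract' (x y : ℝ) : dS1 x (Int.fract y) = dS1 x y := by
  rw [dS1_symm, dS1_fract, dS1_symm]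

lemma dS1Set_le {A : Set ℝ} (x : ℝ) {w : ℝ} (hw : w ∈ A) : dS1Set x A ≤ dS1 x w :=
  csInf_le ⟨0, by rintro _ ⟨y, _, rfl⟩; exact dS1_nonneg _ _⟩ (mem_image_of_mem _ hw)

lemma psi_diff {ψ : ℝ → ℝ} (h : ContDiff ℝ 2 ψ) : Differentiable ℝ ψ :=
  h.differentiable (by norm_num)

lemma psi_deriv_diff {ψ : ℝ → ℝ} (h : ContDiff ℝ 2 ψ) : Differentiable ℝ (deriv ψ) := by
  have h2 : ContDiff ℝ (1 + 1) ψ := by norm_num; exact h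
  exact (contDiff_succ_iff_deriv.mp h2).2.2.differentiable one_ne_zero

lemma lip_abs {ψ : ℝ → ℝ} (h : ContDiff ℝ 2 ψ) (hb : ∀ x : ℝ, |deriv ψ x| ≤ 1 / 10)
    (y z : ℝ) : |ψ y - ψ z| ≤ (1 / 10) * |y - z| := by
  have := Convex.norm_image_sub_le_of_norm_deriv_le
    (f := ψ) (C := 1/10) (s := univ) (fun x _ => (psi_diff h) x)
    (fun x _ => by simpa [Real.norm_eq_abs] using hb x) convex_univ (mem_univ z) (mem_univ y)
  simpa [Real.norm_eq_abs] using this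

lemma lip_deriv_abs {ψ : ℝ → ℝ} (h : ContDiff ℝ 2 ψ) (hb : ∀ x : ℝ, |deriv (deriv ψ) x| ≤ 1 / 10)
    (y z : ℝ) : |deriv ψ y - deriv ψ z| ≤ (1 / 10) * |y - z| := by
  have := Convex.norm_image_sub_le_of_norm_deriv_le
    (f := deriv ψ) (C := 1/10) (s := univ) (fun x _ => (psi_deriv_diff h) x)
    (fun x _ => by simpa [Real.norm_eq_abs] using hb x) convex_univ (mem_univ z) (mem_univ y)
  simpa [Real.norm_eq_abs] using this

lemma deriv_periodic {ψ : ℝ → ℝ} (hper : Function.Periodic ψ 1) :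
    Function.Periodic (deriv ψ) 1 := by
  intro y
  have h : (fun x : ℝ => ψ (x + 1)) = ψ := funext fun x => hper x
  calc deriv ψ (y + 1) = deriv (fun x => ψ (x + 1)) y := (deriv_comp_add_const _ _ _).symm
    _ = deriv ψ y := by rw [h]

lemma psi_sub_round {ψ : ℝ → ℝ} (hper : Function.Periodic ψ 1) (x : ℝ) (m : ℤ) :
    ψ (x - m) = ψ x := by
  have := hper.sub_int_mul_eq (x := x) (n := m)
  simpa using this

lemma lip_dS1 {ψ : ℝ → ℝ} (h : ContDiff ℝ 2 ψ) (hper : Function.Periodic ψ 1)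
    (hb : ∀ x : ℝ, |deriv ψ x| ≤ 1 / 10) (y z : ℝ) :
    |ψ y - ψ z| ≤ (1 / 10) * dS1 y z := by
  have h1 : ψ (y - round (y - z)) = ψ y := psi_sub_round hper y (round (y - z))
  calc |ψ y - ψ z| = |ψ (y - round (y - z)) - ψ z| := by rw [h1]
    _ ≤ (1/10) * |(y - round (y - z)) - z| := lip_abs h hb _ _
    _ = (1/10) * dS1 y z := by
        rw [show y - (round (y-z):ℝ) - z = y - z - round (y - z) by ring]; rfl

lemma abs_sub_le_of_uIcc {t a b : ℝ} (h : t ∈ uIcc a b) : |t - a| ≤ |b - a| := by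
  rcases le_total a b with hab | hab
  · rw [uIcc_of_le hab] at h
    rw [abs_of_nonneg (by linarith [h.1] : (0:ℝ) ≤ t - a),
      abs_of_nonneg (by linarith : (0:ℝ) ≤ b - a)]
    linarith [h.2]
  · rw [uIcc_of_ge hab] at h
    rw [abs_of_nonpos (by linarith [h.2] : t - a ≤ 0),
      abs_of_nonpos (by linarith : b - a ≤ 0)]
    linarith [h.1]

lemma quad_dS1 {ψ : ℝ → ℝ} (h : ContDiff ℝ 2 ψ) (hper : Function.Periodic ψ 1)
    (hb : ∀ x : ℝ, |deriv (deriv ψ) x| ≤ 1 / 10) {xh : ℝ} (hxh : xh ∈ Crit ψ) (y : ℝ) :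
    |ψ y - ψ xh| ≤ (1 / 10) * dS1 y xh ^ 2 := by
  set m := round (y - xh) with hm
  set y' := y - (m : ℝ) with hy'
  have h1 : ψ y' = ψ y := psi_sub_round hper y m
  have hd : |y' - xh| = dS1 y xh := by
    rw [hy', hm]
    rw [show y - (round (y - xh):ℝ) - xh = y - xh - round (y - xh) by ring]; rfl
  have key : |ψ y' - ψ xh| ≤ ((1/10) * |y' - xh|) * |y' - xh| := by
    have := Convex.norm_image_sub_le_of_norm_deriv_le
      (f := ψ) (C := (1/10) * |y' - xh|) (s := uIcc xh y')
      (fun t _ => (psi_diff h) t)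
      (fun t ht => by
        have h2 : |deriv ψ t - deriv ψ xh| ≤ (1/10) * |t - xh| := lip_deriv_abs h hb t xh
        have h3 : deriv ψ xh = 0 := hxh
        have h4 : |t - xh| ≤ |y' - xh| := abs_sub_le_of_uIcc ht
        rw [h3, sub_zero] at h2
        simp only [Real.norm_eq_abs]
        nlinarith [abs_nonneg (t - xh)])
      (convex_uIcc _ _) left_mem_uIcc right_mem_uIcc
    simpa [Real.norm_eq_abs] using this
  calc |ψ y - ψ xh| = |ψ y' - ψ xh| := by rw [h1]
    _ ≤ ((1/10) * |y' - xh|) * |y' - xh| := key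
    _ = (1/10) * dS1 y xh ^ 2 := by rw [hd]; ring

lemma crit_fract {ψ : ℝ → ℝ} (hper : Function.Periodic ψ 1) {y : ℝ} (hy : y ∈ Crit ψ) :
    Int.fract y ∈ Crit ψ ∩ Ico (0:ℝ) 1 := by
  have hp := deriv_periodic hper
  have h1 : deriv ψ (Int.fract y) = deriv ψ y := by
    have h := hp.sub_int_mul_eq (x := y) (n := ⌊y⌋)
    rw [Int.fract]; simpa using h
  exact ⟨by rw [Crit, mem_setOf_eq, h1]; exact hy, Int.fract_nonneg y, Int.fract_lt_one y⟩

lemma crit_nonempty {ψ : ℝ → ℝ} (hper : Function.Periodic ψ 1) (hC2 : ContDiff ℝ 2 ψ) :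
    (Crit ψ).Nonempty := by
  obtain ⟨c, _, hc⟩ := exists_deriv_eq_zero (f := ψ) (a := 0) (b := 1) one_pos
    ((psi_diff hC2).continuous.continuousOn) (by simpa using (hper 0).symm)
  exact ⟨c, hc⟩

lemma exists_attain {ψ : ℝ → ℝ} (hper : Function.Periodic ψ 1) (hC2 : ContDiff ℝ 2 ψ)
    (hH1 : (Crit ψ ∩ Ico (0:ℝ) 1).Finite) (x : ℝ) :
    ∃ w ∈ Crit ψ, dS1Set x (Crit ψ) = dS1 x w := by
  have hEq : dS1 x '' Crit ψ = dS1 x '' (Crit ψ ∩ Ico (0:ℝ) 1) := by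
    apply Subset.antisymm
    · rintro _ ⟨y, hy, rfl⟩
      exact ⟨Int.fract y, crit_fract hper hy, dS1_fract' x y⟩
    · exact image_mono inter_subset_left
  have hne : (dS1 x '' (Crit ψ ∩ Ico (0:ℝ) 1)).Nonempty := by
    obtain ⟨y, hy⟩ := crit_nonempty hper hC2
    exact ⟨dS1 x (Int.fract y), Int.fract y, crit_fract hper hy, rfl⟩
  have hfin : (dS1 x '' (Crit ψ ∩ Ico (0:ℝ) 1)).Finite := hH1.image _
  obtain ⟨w, hw, hweq⟩ := hne.csInf_mem hfin
  exact ⟨w, hw.1, by rw [dS1Set, hEq, hweq]⟩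

lemma dS1Set_lower {ψ : ℝ → ℝ} (hper : Function.Periodic ψ 1) (hC2 : ContDiff ℝ 2 ψ)
    (hH1 : (Crit ψ ∩ Ico (0:ℝ) 1).Finite) (u v : ℝ) :
    dS1Set v (Crit ψ) - dS1 u v ≤ dS1Set u (Crit ψ) := by
  obtain ⟨w, hw, hweq⟩ := exists_attain hper hC2 hH1 u
  have h1 : dS1Set v (Crit ψ) ≤ dS1 v w := dS1Set_le v hw
  have h2 : dS1 v w ≤ dS1 v u + dS1 u w := dS1_triangle v u w
  have h3 : dS1 v u = dS1 u v := dS1_symm v u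
  linarith [hweq ▸ le_refl (dS1 u w)]

lemma dS1_cmap {ψ : ℝ → ℝ} (L a y z : ℝ) :
    dS1 (cmap ψ L a y) (cmap ψ L a z) ≤ |L * (ψ y - ψ z)| := by
  rw [cmap, cmap, dS1_fract, dS1_fract']
  calc dS1 (L * ψ y + a) (L * ψ z + a) ≤ |(L * ψ y + a) - (L * ψ z + a)| := dS1_le_abs _ _
    _ = |L * (ψ y - ψ z)| := by ring_nf

lemma dS1_cmap_lip {ψ : ℝ → ℝ} (hC2 : ContDiff ℝ 2 ψ) (hper : Function.Periodic ψ 1)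
    (hb : ∀ x : ℝ, |deriv ψ x| ≤ 1 / 10) {L : ℝ} (hL : 0 ≤ L) (a y z : ℝ) :
    dS1 (cmap ψ L a y) (cmap ψ L a z) ≤ (L / 10) * dS1 y z := by
  calc dS1 (cmap ψ L a y) (cmap ψ L a z) ≤ |L * (ψ y - ψ z)| := dS1_cmap L a y z
    _ = L * |ψ y - ψ z| := by rw [abs_mul, abs_of_nonneg hL]
    _ ≤ L * ((1/10) * dS1 y z) := mul_le_mul_of_nonneg_left (lip_dS1 hC2 hper hb y z) hL
    _ = (L / 10) * dS1 y z := by ring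

lemma dS1_cmap_quad {ψ : ℝ → ℝ} (hC2 : ContDiff ℝ 2 ψ) (hper : Function.Periodic ψ 1)
    (hb : ∀ x : ℝ, |deriv (deriv ψ) x| ≤ 1 / 10) {L : ℝ} (hL : 0 ≤ L) (a : ℝ)
    {xh : ℝ} (hxh : xh ∈ Crit ψ) (y : ℝ) :
    dS1 (cmap ψ L a y) (cmap ψ L a xh) ≤ (L / 10) * dS1 y xh ^ 2 := by
  calc dS1 (cmap ψ L a y) (cmap ψ L a xh) ≤ |L * (ψ y - ψ xh)| := dS1_cmap L a y xh
    _ = L * |ψ y - ψ xh| := by rw [abs_mul, abs_of_nonneg hL]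
    _ ≤ L * ((1/10) * dS1 y xh ^ 2) :=
        mul_le_mul_of_nonneg_left (quad_dS1 hC2 hper hb hxh y) hL
    _ = (L / 10) * dS1 y xh ^ 2 := by ring

lemma rpow_small {δ β L : ℝ} (hδ : 0 < δ) (hβ : 0 < β) (h1 : 1 ≤ L)
    (h2 : δ ^ (-(1/β)) ≤ L) : L ^ (-β) ≤ δ := by
  have hL0 : (0:ℝ) < L := lt_of_lt_of_le one_pos h1
  have h3 : (δ ^ (-(1/β))) ^ β ≤ L ^ β :=
    Real.rpow_le_rpow (Real.rpow_pos_of_pos hδ _).le h2 hβ.le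
  have h4 : (δ ^ (-(1/β))) ^ β = δ⁻¹ := by
    rw [← Real.rpow_mul hδ.le, show -(1/β) * β = -1 by field_simp]
    exact Real.rpow_neg_one δ
  rw [h4] at h3
  rw [Real.rpow_neg hL0.le]
  calc (L ^ β)⁻¹ ≤ (δ⁻¹)⁻¹ := inv_anti₀ (inv_pos.mpr hδ) h3
    _ = δ := inv_inv δ

end AuxExp

set_option maxHeartbeats 2000000 in
/-- The consequences of Lemma 2.2 under `(H3)_{c,k}` (Section 2.2).  There is
`L₀ = L₀(β,c,ψ)`, independent of `k`, such that for all `L ≥ L₀`: (i) the postcritical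
iterates `f^i(xh)`, `1 ≤ i ≤ k`, lie in `G`; (ii) for `x ∈ B^l_{ω₀}`, `1 ≤ l ≤ k`, the
iterates `f^i_ω(x)` (`1 ≤ i ≤ l`) lie in `G` and `|(f^l_{θω})'(f_{ω₀}x)| ≥ L^{l(1-β)}`;
(iii) if moreover `l < k`, then `|f'_{ω₀}(x)| ≥ L^{1-(l+1)/2-β}` and
`|(f^{l+1}_ω)'(x)| ≥ L^{(l+1)(1/2-β)}`. -/
theorem lemma_expansion (ψ : ℝ → ℝ) (hψ : PsiReg ψ) (hH4 : H4 ψ)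
    (K₁ : ℝ) (hK1 : K1hyp ψ K₁) (β c : ℝ)
    (hβ : β ∈ Ioo (0:ℝ) (1 / 100)) (hc : c ∈ Ioo (0:ℝ) 1) :
    ∃ L₀ : ℝ, 0 < L₀ ∧ ∀ L : ℝ, L₀ ≤ L → ∀ a ∈ Ico (0:ℝ) 1, ∀ k : ℕ, 1 ≤ k →
      H3cond ψ L a c k →
      ∀ ε : ℝ, 0 < ε → ε < L ^ (-(max ((k : ℝ) - 1) (1 / 2)) - β) →
        (∀ xh ∈ Crit ψ, ∀ i : ℕ, 1 ≤ i → i ≤ k → detIter ψ L a xh i ∈ Gset ψ K₁ L β) ∧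
          ∀ ω : ℕ → ℝ, (∀ i, |ω i| ≤ ε) → ∀ l : ℕ, 1 ≤ l → l ≤ k →
            ∀ x : ℝ, x + ω 0 ∈ BlSet ψ K₁ L β k l →
              (∀ i : ℕ, 1 ≤ i → i ≤ l → orbitW ψ L a ω x i ∈ Gset ψ K₁ L β) ∧
                L ^ ((l : ℝ) * (1 - β)) ≤
                  derivAbs ψ L a (fun n => ω (n + 1)) (cmap ψ L a (x + ω 0)) l ∧
                (l < k →
                  L ^ (1 - ((l : ℝ) + 1) / 2 - β) ≤ |L * deriv ψ (x + ω 0)| ∧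
                    L ^ (((l : ℝ) + 1) * (1 / 2 - β)) ≤ derivAbs ψ L a ω x (l + 1)) := by
  
  obtain ⟨hper, hC2, hH1, _⟩ := hψ
  obtain ⟨hb1, hb2⟩ := hH4
  obtain ⟨hK0, hK⟩ := hK1
  obtain ⟨hβ0, hβ1⟩ := hβ
  obtain ⟨hc0, hc1⟩ := hc
  set δ : ℝ := min (min (c / 2 / (K₁⁻¹ ^ 2 + 2)) (K₁ * c / 4)) (c / 4) with hδdef
  have hKinv : 0 < K₁⁻¹ := inv_pos.mpr hK0
  have hδ : 0 < δ := by
    refine lt_min (lt_min ?_ ?_) ?_ <;> positivity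
  refine ⟨max 20 (δ ^ (-(1/β))), lt_of_lt_of_le (by norm_num) (le_max_left _ _), ?_⟩
  intro L hL a _ k hk hH3 ε hε0 hεlt
  have hL20 : (20:ℝ) ≤ L := le_trans (le_max_left _ _) hL
  have hL1 : (1:ℝ) ≤ L := by linarith
  have hL0 : (0:ℝ) < L := by linarith
  have hLβδ : L ^ (-β) ≤ δ := AuxExp.rpow_small hδ hβ0 hL1 (le_trans (le_max_right _ _) hL)
  have hmax12 : (1:ℝ)/2 ≤ max ((k:ℝ) - 1) (1/2) := le_max_right _ _
  have hεβ : ε ≤ L ^ (-β) := by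
    have h1 : -(max ((k:ℝ) - 1) (1/2)) - β ≤ -β := by linarith
    exact le_trans hεlt.le (Real.rpow_le_rpow_of_exponent_le hL1 h1)
  have hεc4 : ε ≤ c / 4 := le_trans (le_trans hεβ hLβδ) (min_le_right _ _)
  have hKc : L ^ (-β) ≤ K₁ * c / 4 :=
    le_trans hLβδ (le_trans (min_le_left _ _) (min_le_right _ _))
  have hc2' : (K₁⁻¹ ^ 2 + 2) * L ^ (-β) ≤ c / 2 := by
    have h1 : L ^ (-β) ≤ c / 2 / (K₁⁻¹ ^ 2 + 2) :=
      le_trans hLβδ (le_trans (min_le_left _ _) (min_le_left _ _))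
    have h2 : (0:ℝ) < K₁⁻¹ ^ 2 + 2 := by positivity
    calc (K₁⁻¹ ^ 2 + 2) * L ^ (-β) ≤ (K₁⁻¹ ^ 2 + 2) * (c / 2 / (K₁⁻¹ ^ 2 + 2)) :=
          mul_le_mul_of_nonneg_left h1 h2.le
      _ = c / 2 := by field_simp
  have hGb : K₁⁻¹ * L ^ (-β) ≤ c / 4 := by
    calc K₁⁻¹ * L ^ (-β) ≤ K₁⁻¹ * (K₁ * c / 4) := mul_le_mul_of_nonneg_left hKc hKinv.le
      _ = c / 4 := by field_simp
  constructor
  · -- part (i)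
    intro xh hxh i hi1 hik
    have h3 := hH3 xh hxh i hi1 hik
    simp only [Gset, Bset, mem_compl_iff, mem_setOf_eq, not_le]
    linarith
  · intro ω hω l hl1 hlk x hxB
    have hd0 : dS1Set (x + ω 0) (Crit ψ) ≤ K₁⁻¹ * L ^ (-(l:ℝ) / 2 - β) := by
      by_cases hlk' : l = k
      · subst hlk'
        simp only [BlSet, if_pos rfl, Bset, mem_setOf_eq] at hxB
        exact hxB
      · simp only [BlSet, if_neg hlk', Bset, mem_diff, mem_setOf_eq] at hxB
        exact hxB.1
    obtain ⟨xh, hxhC, hxheq⟩ := AuxExp.exists_attain hper hC2 hH1 (x + ω 0)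
    have hd : dS1 (x + ω 0) xh ≤ K₁⁻¹ * L ^ (-(l:ℝ) / 2 - β) := by rw [← hxheq]; exact hd0
    have hD1nn : (0:ℝ) ≤ (L/10) * (K₁⁻¹ * L ^ (-(l:ℝ) / 2 - β)) ^ 2 := by positivity
    -- the shadowing induction
    have key : ∀ j : ℕ, dS1 (orbitW ψ L a ω x (j+1)) (detIter ψ L a xh (j+1)) ≤
        (L/10)^j * ((L/10) * (K₁⁻¹ * L ^ (-(l:ℝ) / 2 - β)) ^ 2) + 2*ε*((L/10)^j - 1) := by
      intro j
      induction j with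
      | zero =>
        have h1 : orbitW ψ L a ω x 1 = cmap ψ L a (x + ω 0) := by simp [orbitW]
        have h2 : detIter ψ L a xh 1 = cmap ψ L a xh := by simp [detIter, orbitW]
        rw [h1, h2]
        have hq := AuxExp.dS1_cmap_quad hC2 hper hb2 hL0.le a hxhC (x + ω 0)
        have hsq : dS1 (x + ω 0) xh ^ 2 ≤ (K₁⁻¹ * L ^ (-(l:ℝ) / 2 - β)) ^ 2 :=
          pow_le_pow_left₀ (AuxExp.dS1_nonneg _ _) hd 2
        simp only [pow_zero, one_mul]
        have := mul_le_mul_of_nonneg_left hsq (by positivity : (0:ℝ) ≤ L/10)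
        linarith
      | succ j ih =>
        have h1 : orbitW ψ L a ω x (j+1+1)
            = cmap ψ L a (orbitW ψ L a ω x (j+1) + ω (j+1)) := rfl
        have h2 : detIter ψ L a xh (j+1+1)
            = cmap ψ L a (detIter ψ L a xh (j+1) + 0) := rfl
        have step := AuxExp.dS1_cmap_lip hC2 hper hb1 hL0.le a
          (orbitW ψ L a ω x (j+1) + ω (j+1)) (detIter ψ L a xh (j+1) + 0)
        have tri : dS1 (orbitW ψ L a ω x (j+1) + ω (j+1)) (detIter ψ L a xh (j+1) + 0) ≤
            dS1 (orbitW ψ L a ω x (j+1)) (detIter ψ L a xh (j+1)) + ε := by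
          rw [add_zero]
          have t1 := AuxExp.dS1_triangle (orbitW ψ L a ω x (j+1) + ω (j+1))
            (orbitW ψ L a ω x (j+1)) (detIter ψ L a xh (j+1))
          have t2 : dS1 (orbitW ψ L a ω x (j+1) + ω (j+1)) (orbitW ψ L a ω x (j+1)) ≤ ε := by
            calc dS1 (orbitW ψ L a ω x (j+1) + ω (j+1)) (orbitW ψ L a ω x (j+1))
                ≤ |orbitW ψ L a ω x (j+1) + ω (j+1) - orbitW ψ L a ω x (j+1)| :=
                  AuxExp.dS1_le_abs _ _
              _ = |ω (j+1)| := by ring_nf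
              _ ≤ ε := hω (j+1)
          linarith
        have main : dS1 (orbitW ψ L a ω x (j+1+1)) (detIter ψ L a xh (j+1+1)) ≤
            (L/10) * (dS1 (orbitW ψ L a ω x (j+1)) (detIter ψ L a xh (j+1)) + ε) := by
          rw [h1, h2]
          exact le_trans step (mul_le_mul_of_nonneg_left tri (by positivity))
        have step2 : dS1 (orbitW ψ L a ω x (j+1+1)) (detIter ψ L a xh (j+1+1)) ≤
            (L/10) * (((L/10)^j * ((L/10) * (K₁⁻¹ * L ^ (-(l:ℝ) / 2 - β)) ^ 2)
              + 2*ε*((L/10)^j - 1)) + ε) :=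
          le_trans main (mul_le_mul_of_nonneg_left (by linarith) (by positivity))
        rw [pow_succ]
        nlinarith [mul_nonneg hε0.le (show (0:ℝ) ≤ L/10 - 2 by linarith)]
    have hpow_nat : ∀ n : ℕ, ((L:ℝ)/10)^n ≤ L^n := fun n =>
      pow_le_pow_left₀ (by positivity) (by linarith) n
    have e2 : (L:ℝ)^(l-1) = L ^ ((l:ℝ) - 1) := by
      rw [← Real.rpow_natCast L (l-1), Nat.cast_sub hl1, Nat.cast_one]
    have hD1b : (L:ℝ)^(l-1) * ((L/10) * (K₁⁻¹ * L ^ (-(l:ℝ) / 2 - β)) ^ 2)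
        ≤ K₁⁻¹^2 * L ^ (-β) := by
      have e4 : L ^ (-(2*β)) = L ^ ((l:ℝ)-1) *
          (L ^ (-(l:ℝ) / 2 - β) * (L ^ (-(l:ℝ) / 2 - β) * L)) := by
        rw [show -(2*β) = ((l:ℝ)-1) + ((-(l:ℝ) / 2 - β) + ((-(l:ℝ) / 2 - β) + 1)) by ring,
          Real.rpow_add hL0, Real.rpow_add hL0, Real.rpow_add hL0, Real.rpow_one]
      have hle : (L:ℝ)^(l-1) * ((L/10) * (K₁⁻¹ * L ^ (-(l:ℝ) / 2 - β)) ^ 2)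
          ≤ K₁⁻¹^2 * L ^ (-(2*β)) := by
        rw [e2, e4]
        calc L ^ ((l:ℝ)-1) * ((L/10) * (K₁⁻¹ * L ^ (-(l:ℝ) / 2 - β)) ^ 2)
            = (K₁⁻¹^2 * (L ^ ((l:ℝ)-1) * (L ^ (-(l:ℝ) / 2 - β) * L ^ (-(l:ℝ) / 2 - β))))
              * (L/10) := by ring
          _ ≤ (K₁⁻¹^2 * (L ^ ((l:ℝ)-1) * (L ^ (-(l:ℝ) / 2 - β) * L ^ (-(l:ℝ) / 2 - β))))
              * L := mul_le_mul_of_nonneg_left (by linarith) (by positivity)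
          _ = K₁⁻¹^2 * (L ^ ((l:ℝ)-1) * (L ^ (-(l:ℝ) / 2 - β) * (L ^ (-(l:ℝ) / 2 - β) * L)))
              := by ring
      have h5 : L ^ (-(2*β)) ≤ L ^ (-β) :=
        Real.rpow_le_rpow_of_exponent_le hL1 (by linarith)
      calc (L:ℝ)^(l-1) * ((L/10) * (K₁⁻¹ * L ^ (-(l:ℝ) / 2 - β)) ^ 2)
          ≤ K₁⁻¹^2 * L ^ (-(2*β)) := hle
        _ ≤ K₁⁻¹^2 * L ^ (-β) := mul_le_mul_of_nonneg_left h5 (by positivity)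
    have hεl : (L:ℝ)^(l-1) * ε ≤ L ^ (-β) := by
      have h1 : ε ≤ L ^ (-((l:ℝ)-1) - β) := by
        have hcast : (l:ℝ) - 1 ≤ max ((k:ℝ) - 1) (1/2) := by
          have : (l:ℝ) ≤ (k:ℝ) := Nat.cast_le.mpr hlk
          exact le_trans (by linarith) (le_max_left _ _)
        exact le_trans hεlt.le (Real.rpow_le_rpow_of_exponent_le hL1 (by linarith))
      have h2 : (L:ℝ)^(l-1) * ε ≤ L ^ ((l:ℝ)-1) * L ^ (-((l:ℝ)-1) - β) := by
        rw [e2]; exact mul_le_mul_of_nonneg_left h1 (Real.rpow_nonneg hL0.le _)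
      have h3 : L ^ ((l:ℝ)-1) * L ^ (-((l:ℝ)-1) - β) = L ^ (-β) := by
        rw [← Real.rpow_add hL0]; congr 1; ring
      rw [h3] at h2; exact h2
    have hΔ : ∀ i : ℕ, 1 ≤ i → i ≤ l →
        dS1 (orbitW ψ L a ω x i) (detIter ψ L a xh i) ≤ c/2 := by
      intro i hi1 hil
      obtain ⟨j, rfl⟩ : ∃ j, i = j + 1 := ⟨i-1, by omega⟩
      have hk1 := key j
      have hmono : ((L:ℝ)/10)^j ≤ ((L:ℝ)/10)^(l-1) :=
        pow_le_pow_right₀ (by linarith) (by omega)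
      linarith [mul_le_mul_of_nonneg_right hmono hD1nn,
        mul_le_mul_of_nonneg_right (hpow_nat (l-1)) hD1nn,
        mul_le_mul_of_nonneg_right hmono (by linarith : (0:ℝ) ≤ 2*ε),
        mul_le_mul_of_nonneg_right (hpow_nat (l-1)) (by linarith : (0:ℝ) ≤ 2*ε),
        hD1b, hεl, hc2', hε0.le]
    have hfar : ∀ i : ℕ, 1 ≤ i → i ≤ l →
        c/2 ≤ dS1Set (orbitW ψ L a ω x i) (Crit ψ) := by
      intro i hi1 hil
      have h1 := AuxExp.dS1Set_lower hper hC2 hH1 (orbitW ψ L a ω x i) (detIter ψ L a xh i)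
      have h2 := hH3 xh hxhC i hi1 (le_trans hil hlk)
      have h3 := hΔ i hi1 hil
      have h4 : dS1 (orbitW ψ L a ω x i) (detIter ψ L a xh i)
          = dS1 (detIter ψ L a xh i) (orbitW ψ L a ω x i) := AuxExp.dS1_symm _ _
      linarith
    have hterm : ∀ i : ℕ, 1 ≤ i → i ≤ l →
        L ^ (1 - β) ≤ |L * deriv ψ (orbitW ψ L a ω x i + ω i)| := by
      intro i hi1 hil
      have h1 := AuxExp.dS1Set_lower hper hC2 hH1 (orbitW ψ L a ω x i + ω i)
        (orbitW ψ L a ω x i)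
      have h2 : dS1 (orbitW ψ L a ω x i + ω i) (orbitW ψ L a ω x i) ≤ ε := by
        calc dS1 (orbitW ψ L a ω x i + ω i) (orbitW ψ L a ω x i)
            ≤ |orbitW ψ L a ω x i + ω i - orbitW ψ L a ω x i| := AuxExp.dS1_le_abs _ _
          _ = |ω i| := by ring_nf
          _ ≤ ε := hω i
      have h3 := hfar i hi1 hil
      have h4 : c/4 ≤ dS1Set (orbitW ψ L a ω x i + ω i) (Crit ψ) := by linarith
      have h5 := hK (orbitW ψ L a ω x i + ω i)
      have h6 : K₁ * (c/4) ≤ |deriv ψ (orbitW ψ L a ω x i + ω i)| :=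
        le_trans (mul_le_mul_of_nonneg_left h4 hK0.le) h5
      have h7 : L ^ (-β) ≤ |deriv ψ (orbitW ψ L a ω x i + ω i)| :=
        le_trans hKc (by linarith)
      rw [abs_mul, abs_of_nonneg hL0.le]
      calc L ^ (1 - β) = L * L ^ (-β) := by
            rw [show (1:ℝ) - β = 1 + (-β) by ring, Real.rpow_add hL0, Real.rpow_one]
        _ ≤ L * |deriv ψ (orbitW ψ L a ω x i + ω i)| :=
            mul_le_mul_of_nonneg_left h7 hL0.le
    have hshift : ∀ i : ℕ, orbitW ψ L a (fun n => ω (n+1)) (cmap ψ L a (x + ω 0)) i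
        = orbitW ψ L a ω x (i+1) := by
      intro i
      induction i with
      | zero => simp [orbitW]
      | succ i ih => simp [orbitW, ih]
    have hprodbound : L ^ ((l:ℝ) * (1-β)) ≤
        ∏ i ∈ Finset.range l, |L * deriv ψ (orbitW ψ L a ω x (i+1) + ω (i+1))| := by
      have hge : L ^ ((l:ℝ) * (1-β)) = (L ^ ((1:ℝ)-β))^l := by
        rw [mul_comm, Real.rpow_mul hL0.le, Real.rpow_natCast]
      calc L ^ ((l:ℝ) * (1-β)) = (L ^ ((1:ℝ)-β))^l := hge
        _ = ∏ _i ∈ Finset.range l, L ^ ((1:ℝ)-β) := by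
            rw [Finset.prod_const, Finset.card_range]
        _ ≤ ∏ i ∈ Finset.range l, |L * deriv ψ (orbitW ψ L a ω x (i+1) + ω (i+1))| :=
            Finset.prod_le_prod (fun i _ => Real.rpow_nonneg hL0.le _)
              (fun i hi => hterm (i+1) (by omega) (by
                simp only [Finset.mem_range] at hi; omega))
    refine ⟨fun i hi1 hil => ?_, ?_, fun hlt => ?_⟩
    · -- G membership
      simp only [Gset, Bset, mem_compl_iff, mem_setOf_eq, not_le]
      have h1 := hfar i hi1 hil
      linarith
    · -- derivative bound along the orbit after one step
      have heq : derivAbs ψ L a (fun n => ω (n+1)) (cmap ψ L a (x + ω 0)) l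
          = ∏ i ∈ Finset.range l, |L * deriv ψ (orbitW ψ L a ω x (i+1) + ω (i+1))| := by
        rw [derivAbs]
        exact Finset.prod_congr rfl (fun i _ => by rw [hshift i])
      rw [heq]
      exact hprodbound
    · -- part (iii)
      have hne : l ≠ k := Nat.ne_of_lt hlt
      have hxB' : ¬ (dS1Set (x + ω 0) (Crit ψ) ≤ K₁⁻¹ * L ^ (-((l:ℝ)+1) / 2 - β)) := by
        simp only [BlSet, if_neg hne, Bset, mem_diff, mem_setOf_eq] at hxB
        exact hxB.2
      have hfar0 : K₁⁻¹ * L ^ (-((l:ℝ)+1) / 2 - β) ≤ dS1Set (x + ω 0) (Crit ψ) :=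
        (not_le.mp hxB').le
      have hA : L ^ (1 - ((l:ℝ)+1)/2 - β) ≤ |L * deriv ψ (x + ω 0)| := by
        have h5 := hK (x + ω 0)
        have h6 : K₁ * (K₁⁻¹ * L ^ (-((l:ℝ)+1) / 2 - β)) ≤ |deriv ψ (x + ω 0)| :=
          le_trans (mul_le_mul_of_nonneg_left hfar0 hK0.le) h5
        have h7 : K₁ * (K₁⁻¹ * L ^ (-((l:ℝ)+1) / 2 - β)) = L ^ (-((l:ℝ)+1) / 2 - β) := by
          rw [← mul_assoc, mul_inv_cancel₀ (ne_of_gt hK0), one_mul]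
        rw [abs_mul, abs_of_nonneg hL0.le]
        calc L ^ (1 - ((l:ℝ)+1)/2 - β) = L * L ^ (-((l:ℝ)+1) / 2 - β) := by
              rw [show 1 - ((l:ℝ)+1)/2 - β = 1 + (-((l:ℝ)+1) / 2 - β) by ring,
                Real.rpow_add hL0, Real.rpow_one]
          _ ≤ L * |deriv ψ (x + ω 0)| :=
              mul_le_mul_of_nonneg_left (h7 ▸ h6) hL0.le
      refine ⟨hA, ?_⟩
      have hsplit : derivAbs ψ L a ω x (l+1) =
          (∏ i ∈ Finset.range l, |L * deriv ψ (orbitW ψ L a ω x (i+1) + ω (i+1))|)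
            * |L * deriv ψ (x + ω 0)| := by
        rw [derivAbs, Finset.prod_range_succ']
        rfl
      rw [hsplit,
        show ((l:ℝ)+1)*(1/2-β) = (l:ℝ)*(1-β) + (1 - ((l:ℝ)+1)/2 - β) by ring,
        Real.rpow_add hL0]
      exact mul_le_mul hprodbound hA (Real.rpow_nonneg hL0.le _)
        (Finset.prod_nonneg fun i _ => abs_nonneg _)
end
end

section
/- There exists L₀ = L₀(ψ) such that for all L ≥ L₀ the following holds. Let η ∈ [−3/4, 0], let ω ∈ Ω, let y, y' ∈ S¹, let i ≥ 1, and let J be an interval with endpoints y and y'. Assume that for every 0 ≤ j < i the shifted image f^j_ω(J) + ω_j is contained in the complement of B(η). Then |log( (f^i_ω)'(y) / (f^i_ω)'(y') )| ≤ 2 ‖ψ''‖_{C⁰} L^{−1−2η} |f̃^i_ω(y) − f̃^i_ω(y')|. -/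
open MeasureTheory Set Filter Topology

noncomputable section

private lemma mvt_abs_lower {φ : ℝ → ℝ} (hφ : Differentiable ℝ φ) {m : ℝ} (hm : 0 ≤ m)
    (u v : ℝ) (hbd : ∀ t ∈ uIcc u v, m ≤ |deriv φ t|) :
    m * |u - v| ≤ |φ u - φ v| := by
  have key : ∀ a b : ℝ, a < b → (∀ t ∈ uIcc a b, m ≤ |deriv φ t|) →
      m * |a - b| ≤ |φ a - φ b| := by
    intro a b hab hbd'
    obtain ⟨c, hc, hceq⟩ := exists_deriv_eq_slope φ hab
      hφ.continuous.continuousOn hφ.differentiableOn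
    have hcm : m ≤ |deriv φ c| := hbd' c (by
      rw [uIcc_of_le hab.le]; exact Ioo_subset_Icc_self hc)
    have hba : (0:ℝ) < b - a := sub_pos.mpr hab
    have heq : |φ b - φ a| = |deriv φ c| * (b - a) := by
      rw [hceq, abs_div, abs_of_pos hba, div_mul_cancel₀]
      exact hba.ne'
    calc m * |a - b| = m * (b - a) := by rw [abs_sub_comm, abs_of_pos hba]
      _ ≤ |deriv φ c| * (b - a) := mul_le_mul_of_nonneg_right hcm hba.le
      _ = |φ b - φ a| := heq.symm
      _ = |φ a - φ b| := abs_sub_comm _ _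
  rcases lt_trichotomy u v with h|h|h
  · exact key u v h hbd
  · simp [h]
  · rw [abs_sub_comm u v, abs_sub_comm (φ u)]
    exact key v u h (by rwa [uIcc_comm])

/-- **Lemma 4.4** (short-distance distortion).  There is `L₀ = L₀(ψ)` such that for all
`L ≥ L₀`, `η ∈ [-3/4, 0]`, any sample `ω`, `y, y' ∈ S¹`, `i ≥ 1` and `J` the interval
between `y` and `y'`: if `f^j_ω(J) + ω_j ⊆ B(η)ᶜ` for all `0 ≤ j < i`, then
`|log ((f^i_ω)'(y) / (f^i_ω)'(y'))| ≤ 2 ‖ψ''‖_{C⁰} L^{-1-2η} |f̃^i_ω(y) - f̃^i_ω(y')|`. -/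
theorem lemma_shortDist (ψ : ℝ → ℝ) (hψ : PsiReg ψ) (hH4 : H4 ψ)
    (K₁ : ℝ) (hK1 : K1hyp ψ K₁) :
    ∃ L₀ : ℝ, 0 < L₀ ∧ ∀ L : ℝ, L₀ ≤ L → ∀ a ∈ Ico (0:ℝ) 1,
      ∀ ε : ℝ, 0 < ε → ∀ η : ℝ, η ∈ Icc (-(3:ℝ) / 4) 0 →
        ∀ ω : ℕ → ℝ, (∀ i, |ω i| ≤ ε) →
          ∀ y y' : ℝ, y ∈ Ico (0:ℝ) 1 → y' ∈ Ico (0:ℝ) 1 →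
            ∀ i : ℕ, 1 ≤ i →
              (∀ j : ℕ, j < i → ∀ z ∈ uIcc y y',
                liftOrbit ψ L a ω z j + ω j ∉ Bset ψ K₁ L η) →
              |logDerivSumLift ψ L a ω y i - logDerivSumLift ψ L a ω y' i| ≤
                2 * psiC2norm ψ * L ^ (-(1:ℝ) - 2 * η) *
                  |liftOrbit ψ L a ω y i - liftOrbit ψ L a ω y' i| := by
  refine ⟨16, by norm_num, ?_⟩
  intro L hL a ha ε hε η hη ω hω y y' hy hy' i hi havoid
  have hψC : ContDiff ℝ 2 ψ := hψ.2.1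
  have hψd : Differentiable ℝ ψ := hψC.differentiable (by norm_num)
  have hC1 : ContDiff ℝ 1 (deriv ψ) := by
    have h2 : ContDiff ℝ ((1:WithTop ℕ∞) + 1) ψ := by
      have : ((1:WithTop ℕ∞) + 1) = 2 := by norm_num
      rw [this]; exact hψC
    exact (contDiff_succ_iff_deriv.mp h2).2.2
  have hd2 : Differentiable ℝ (deriv ψ) := hC1.differentiable one_ne_zero
  have hLpos : (0:ℝ) < L := by linarith
  have hL1 : (1:ℝ) ≤ L := by linarith
  have hK1pos : 0 < K₁ := hK1.1
  set g : ℕ → ℝ → ℝ := fun j z => liftOrbit ψ L a ω z j with hgdef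
  have hgsucc : ∀ (n : ℕ) (z : ℝ), g (n+1) z = L * ψ (g n z + ω n) + a := fun n z => rfl
  have hgc : ∀ j, Continuous (g j) := by
    intro j
    induction j with
    | zero => exact continuous_id
    | succ n ih =>
      have : g (n+1) = fun z => L * ψ (g n z + ω n) + a := rfl
      rw [this]
      exact (continuous_const.mul (hψd.continuous.comp (ih.add continuous_const))).add
        continuous_const
  -- exponent facts
  have hexp : (2:ℝ) ≤ L ^ ((1:ℝ)+η) := by
    have h1 : L ^ ((1:ℝ)/4) ≤ L ^ ((1:ℝ)+η) :=
      Real.rpow_le_rpow_of_exponent_le hL1 (by linarith [hη.1])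
    have h2 : (16:ℝ) ^ ((1:ℝ)/4) ≤ L ^ ((1:ℝ)/4) :=
      Real.rpow_le_rpow (by norm_num) hL (by norm_num)
    have h3 : (16:ℝ) ^ ((1:ℝ)/4) = 2 := by
      rw [show (16:ℝ) = 2 ^ (4:ℕ) by norm_num, ← Real.rpow_natCast 2 4,
        ← Real.rpow_mul (by norm_num)]
      norm_num
    linarith
  have hEpos : (0:ℝ) < L ^ ((1:ℝ)+η) := Real.rpow_pos_of_pos hLpos _
  set r : ℝ := (L ^ ((1:ℝ)+η))⁻¹ with hrdef
  have hr_pos : 0 < r := inv_pos.mpr hEpos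
  have hr_le : r ≤ 1/2 := by
    rw [hrdef]
    rw [inv_le_comm₀ hEpos (by norm_num)]
    linarith
  have hηpos : (0:ℝ) < L ^ η := Real.rpow_pos_of_pos hLpos _
  -- pointwise derivative lower bound along the relevant intervals
  have hlow : ∀ j, j < i → ∀ t ∈ uIcc (g j y + ω j) (g j y' + ω j),
      L ^ η ≤ |deriv ψ t| := by
    intro j hj t ht
    have hcont : ContinuousOn (fun z => g j z + ω j) (uIcc y y') :=
      ((hgc j).add continuous_const).continuousOn
    obtain ⟨z, hz, hzt⟩ := intermediate_value_uIcc hcont ht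
    have hB := havoid j hj z hz
    have hB' : K₁⁻¹ * L ^ η < dS1Set (g j z + ω j) (Crit ψ) := by
      by_contra hcon
      exact hB (by simpa [Bset] using not_lt.mp hcon)
    have hK := hK1.2 (g j z + ω j)
    have : L ^ η < K₁ * dS1Set (g j z + ω j) (Crit ψ) := by
      have := mul_lt_mul_of_pos_left hB' hK1pos
      rwa [← mul_assoc, mul_inv_cancel₀ hK1pos.ne', one_mul] at this
    rw [← hzt] at *
    linarith [hK]
  have hne : ∀ j, j < i → ∀ t ∈ uIcc (g j y + ω j) (g j y' + ω j), deriv ψ t ≠ 0 := by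
    intro j hj t ht h0
    have := hlow j hj t ht
    rw [h0] at this; simp at this; linarith
  -- expansion step
  have hstep : ∀ j, j < i → |g j y - g j y'| ≤ r * |g (j+1) y - g (j+1) y'| := by
    intro j hj
    have hmvt : L ^ η * |(g j y + ω j) - (g j y' + ω j)| ≤
        |ψ (g j y + ω j) - ψ (g j y' + ω j)| :=
      mvt_abs_lower hψd hηpos.le _ _ (hlow j hj)
    have hd1 : g (j+1) y - g (j+1) y' = L * (ψ (g j y + ω j) - ψ (g j y' + ω j)) := by
      rw [hgsucc, hgsucc]; ring
    have habs : |g (j+1) y - g (j+1) y'| = L * |ψ (g j y + ω j) - ψ (g j y' + ω j)| := by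
      rw [hd1, abs_mul, abs_of_pos hLpos]
    have hsimp : |(g j y + ω j) - (g j y' + ω j)| = |g j y - g j y'| := by
      congr 1; ring
    rw [hsimp] at hmvt
    have hLL : L ^ ((1:ℝ)+η) * |g j y - g j y'| ≤ |g (j+1) y - g (j+1) y'| := by
      rw [habs, Real.rpow_add hLpos, Real.rpow_one, mul_assoc]
      exact mul_le_mul_of_nonneg_left hmvt hLpos.le
    calc |g j y - g j y'| = r * (L ^ ((1:ℝ)+η) * |g j y - g j y'|) := by
          rw [hrdef]; field_simp
      _ ≤ r * |g (j+1) y - g (j+1) y'| := mul_le_mul_of_nonneg_left hLL hr_pos.le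
  -- iterated contraction
  have hiter : ∀ m j, j + m ≤ i → |g j y - g j y'| ≤ r ^ m * |g (j+m) y - g (j+m) y'| := by
    intro m
    induction m with
    | zero => intro j _; simp
    | succ n ih =>
      intro j hji
      have h1 : |g j y - g j y'| ≤ r ^ n * |g (j+n) y - g (j+n) y'| := ih j (by omega)
      have h2 : |g (j+n) y - g (j+n) y'| ≤ r * |g (j+n+1) y - g (j+n+1) y'| :=
        hstep (j+n) (by omega)
      calc |g j y - g j y'| ≤ r ^ n * (r * |g (j+n+1) y - g (j+n+1) y'|) :=
            h1.trans (mul_le_mul_of_nonneg_left h2 (pow_nonneg hr_pos.le n))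
        _ = r ^ (n+1) * |g (j+(n+1)) y - g (j+(n+1)) y'| := by
            rw [show j+(n+1) = j+n+1 by omega]; ring
  -- sup norm of ψ''
  have hbdd : BddAbove (Set.range fun x : ℝ => |deriv (deriv ψ) x|) :=
    ⟨1/10, by rintro _ ⟨x, rfl⟩; exact hH4.2 x⟩
  have hM : ∀ t : ℝ, |deriv (deriv ψ) t| ≤ psiC2norm ψ := fun t => le_ciSup hbdd t
  have hM0 : 0 ≤ psiC2norm ψ := le_trans (abs_nonneg _) (hM 0)
  -- termwise log distortion bound
  have hterm : ∀ j, j < i →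
      abs (Real.log (abs (L * deriv ψ (g j y + ω j))) -
          Real.log (abs (L * deriv ψ (g j y' + ω j)))) ≤
        psiC2norm ψ * L ^ (-η) * |g j y - g j y'| := by
    intro j hj
    set u := g j y + ω j with hu
    set v := g j y' + ω j with hv
    set s := uIcc u v with hs
    have hconv : Convex ℝ s := by rw [hs, uIcc]; exact convex_Icc _ _
    set F : ℝ → ℝ := fun t => Real.log (L * deriv ψ t) with hF
    set F' : ℝ → ℝ := fun t => (L * deriv ψ t)⁻¹ * (L * deriv (deriv ψ) t) with hF'
    have hder : ∀ t ∈ s, HasDerivWithinAt F (F' t) s t := by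
      intro t ht
      have hnz : L * deriv ψ t ≠ 0 := mul_ne_zero hLpos.ne' (hne j hj t ht)
      have h1 : HasDerivAt (fun t => L * deriv ψ t) (L * deriv (deriv ψ) t) t :=
        ((hd2 t).hasDerivAt).const_mul L
      have h2 : HasDerivAt Real.log (L * deriv ψ t)⁻¹ (L * deriv ψ t) :=
        Real.hasDerivAt_log hnz
      exact (h2.comp t h1).hasDerivWithinAt
    have hbound : ∀ t ∈ s, ‖F' t‖ ≤ psiC2norm ψ * L ^ (-η) := by
      intro t ht
      have hge := hlow j hj t ht
      have hpne : deriv ψ t ≠ 0 := hne j hj t ht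
      have : ‖F' t‖ = |deriv (deriv ψ) t| * |deriv ψ t|⁻¹ := by
        rw [hF', Real.norm_eq_abs, abs_mul, abs_inv, abs_mul, abs_mul,
          abs_of_pos hLpos]
        field_simp
      rw [this]
      have hinv : |deriv ψ t|⁻¹ ≤ L ^ (-η) := by
        rw [Real.rpow_neg hLpos.le]
        exact inv_anti₀ hηpos hge
      exact mul_le_mul (hM t) hinv (inv_nonneg.mpr (abs_nonneg _)) hM0
    have := hconv.norm_image_sub_le_of_norm_hasDerivWithin_le hder hbound
      (right_mem_uIcc : v ∈ s) (left_mem_uIcc : u ∈ s)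
    have habs : |u - v| = |g j y - g j y'| := by rw [hu, hv]; congr 1; ring
    rw [Real.norm_eq_abs, Real.norm_eq_abs, habs] at this
    calc abs (Real.log (abs (L * deriv ψ u)) - Real.log (abs (L * deriv ψ v)))
        = |F u - F v| := by rw [hF]; simp only [Real.log_abs]
      _ ≤ psiC2norm ψ * L ^ (-η) * |g j y - g j y'| := this
  -- assemble
  set Δ : ℝ := |liftOrbit ψ L a ω y i - liftOrbit ψ L a ω y' i| with hΔ
  have hΔg : Δ = |g i y - g i y'| := rfl
  have hgeom : ∑ j ∈ Finset.range i, r ^ (i - j) ≤ 2 * r := by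
    have hre : ∀ j ∈ Finset.range i, r ^ (i - j) = r * r ^ (i - 1 - j) := by
      intro j hj
      rw [Finset.mem_range] at hj
      rw [show i - j = (i - 1 - j) + 1 by omega]
      ring
    rw [Finset.sum_congr rfl hre, ← Finset.mul_sum]
    have hrefl : ∑ j ∈ Finset.range i, r ^ (i - 1 - j) = ∑ j ∈ Finset.range i, r ^ j :=
      Finset.sum_range_reflect (fun j => r ^ j) i
    rw [hrefl]
    have h2 : ∑ j ∈ Finset.range i, r ^ j ≤ 2 := by
      calc ∑ j ∈ Finset.range i, r ^ j ≤ ∑ j ∈ Finset.range i, (1/2:ℝ) ^ j :=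
            Finset.sum_le_sum fun j _ => pow_le_pow_left₀ hr_pos.le hr_le j
        _ ≤ 2 := sum_geometric_two_le i
    calc r * ∑ j ∈ Finset.range i, r ^ j ≤ r * 2 :=
          mul_le_mul_of_nonneg_left h2 hr_pos.le
      _ = 2 * r := by ring
  have hfinal : psiC2norm ψ * L ^ (-η) * (2 * r) = 2 * psiC2norm ψ * L ^ (-(1:ℝ) - 2*η) := by
    rw [hrdef, ← Real.rpow_neg hLpos.le, ← mul_assoc]
    rw [show psiC2norm ψ * L ^ (-η) * 2 = 2 * psiC2norm ψ * L ^ (-η) by ring, mul_assoc,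
      ← Real.rpow_add hLpos]
    congr 2
    ring
  calc |logDerivSumLift ψ L a ω y i - logDerivSumLift ψ L a ω y' i|
      = abs (∑ j ∈ Finset.range i, (Real.log (abs (L * deriv ψ (g j y + ω j))) -
          Real.log (abs (L * deriv ψ (g j y' + ω j))))) := by
        rw [logDerivSumLift, logDerivSumLift, ← Finset.sum_sub_distrib]
    _ ≤ ∑ j ∈ Finset.range i, abs (Real.log (abs (L * deriv ψ (g j y + ω j))) -
          Real.log (abs (L * deriv ψ (g j y' + ω j)))) := Finset.abs_sum_le_sum_abs _ _
    _ ≤ ∑ j ∈ Finset.range i, psiC2norm ψ * L ^ (-η) * (r ^ (i - j) * Δ) := by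
        refine Finset.sum_le_sum fun j hj => ?_
        rw [Finset.mem_range] at hj
        refine (hterm j hj).trans ?_
        refine mul_le_mul_of_nonneg_left ?_ (by positivity)
        have := hiter (i - j) j (by omega)
        rwa [show j + (i - j) = i by omega, ← hΔg] at this
    _ = psiC2norm ψ * L ^ (-η) * Δ * ∑ j ∈ Finset.range i, r ^ (i - j) := by
        rw [Finset.mul_sum]
        exact Finset.sum_congr rfl fun j _ => by ring
    _ ≤ psiC2norm ψ * L ^ (-η) * Δ * (2 * r) := by
        refine mul_le_mul_of_nonneg_left hgeom ?_
        have : (0:ℝ) ≤ Δ := abs_nonneg _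
        positivity
    _ = 2 * psiC2norm ψ * L ^ (-(1:ℝ) - 2*η) * Δ := by
        rw [← hfinal]; ring
end
end
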